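/- With notation as in the construction of A(p) from a valuation function p on [w]², for every i ∈ w the element x_i is not in the subalgebra of A(p) generated by {x_j : j < i}. -/
import Mathlib


/-- The three values `≥`, `⊥`, "undefined" of a valuation function. -/
inductive VVal : Type
  | ge : VVal
  | perp : VVal
  | und : VVal
deriving DecidableEq

/-- `p` is a valuation function on the linearly ordered set `W` (only the values on
pairs `i < j` are relevant). -/
structure IsValuation {W : Type u} [LinearOrder W] (p : W → W → VVal) : Prop where
  trans_ge : ∀ i j k : W, i < j → j < k →
    p i j = VVal.ge → p j k = VVal.ge → p i k = VVal.ge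
  mix1 : ∀ i j k : W, i < j → j < k →
    p i j = VVal.perp → p i k = VVal.ge → p j k = VVal.perp
  mix2 : ∀ i j k : W, i < j → j < k →
    p i j = VVal.ge → p i k = VVal.perp → p j k = VVal.perp
  mix3 : ∀ i j k : W, i < j → j < k →
    p i j = VVal.perp → p j k = VVal.ge → p i k = VVal.perp

/-- The elements of the Boolean subalgebra generated by a set `S`. -/
inductive BAGen {α : Type v} [BooleanAlgebra α] (S : Set α) : α → Prop
  | base {a : α} : a ∈ S → BAGen S a
  | bot : BAGen S ⊥
  | sup {a b : α} : BAGen S a → BAGen S b → BAGen S (a ⊔ b)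
  | compl {a : α} : BAGen S a → BAGen S aᶜ

/- ------------------- auxiliary lemmas ------------------- -/

lemma BAGen.mono' {α : Type v} [BooleanAlgebra α] {S T : Set α} (h : S ⊆ T) {a : α}
    (hb : BAGen S a) : BAGen T a := by
  induction hb with
  | base ha => exact .base (h ha)
  | bot => exact .bot
  | sup _ _ ih1 ih2 => exact .sup ih1 ih2
  | compl _ ih => exact .compl ih

lemma blh_compl {Fr Q : Type u} [BooleanAlgebra Fr] [BooleanAlgebra Q]
    (c : BoundedLatticeHom Fr Q) (a : Fr) : c aᶜ = (c a)ᶜ := by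
  have h1 : Disjoint (c aᶜ) (c a) := by
    rw [disjoint_iff, ← map_inf, compl_inf_eq_bot, map_bot]
  have h2 : Codisjoint (c aᶜ) (c a) := by
    rw [codisjoint_iff, ← map_sup, compl_sup_eq_top, map_top]
  exact eq_compl_iff_isCompl.mpr ⟨h1, h2⟩

lemma lift_gen {W Fr Q : Type u} [LinearOrder W] [BooleanAlgebra Fr] [BooleanAlgebra Q]
    (c : BoundedLatticeHom Fr Q) (u : W → Fr) (i : W) {x : Q}
    (h : BAGen {a : Q | ∃ j : W, j < i ∧ a = c (u j)} x) :
    ∃ b : Fr, BAGen {a : Fr | ∃ j : W, j < i ∧ a = u j} b ∧ c b = x := by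
  induction h with
  | base ha =>
      obtain ⟨j, hj, rfl⟩ := ha
      exact ⟨u j, .base ⟨j, hj, rfl⟩, rfl⟩
  | bot => exact ⟨⊥, .bot, map_bot c⟩
  | sup _ _ ih1 ih2 =>
      obtain ⟨b1, h1, e1⟩ := ih1
      obtain ⟨b2, h2, e2⟩ := ih2
      exact ⟨b1 ⊔ b2, .sup h1 h2, by rw [map_sup, e1, e2]⟩
  | compl _ ih =>
      obtain ⟨b, hb, e⟩ := ih
      exact ⟨bᶜ, .compl hb, by rw [blh_compl, e]⟩

lemma finsupp_gen {W Fr : Type u} [LinearOrder W] [BooleanAlgebra Fr]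
    (u : W → Fr) (i : W) {b : Fr}
    (h : BAGen {a : Fr | ∃ j : W, j < i ∧ a = u j} b) :
    ∃ T : Finset W, (∀ j ∈ T, j < i) ∧ BAGen {a : Fr | ∃ j ∈ T, a = u j} b := by
  induction h with
  | base ha =>
      obtain ⟨j, hj, rfl⟩ := ha
      exact ⟨{j}, by simpa using hj, .base ⟨j, by simp⟩⟩
  | bot => exact ⟨∅, by simp, .bot⟩
  | sup _ _ ih1 ih2 =>
      obtain ⟨T1, hT1, h1⟩ := ih1
      obtain ⟨T2, hT2, h2⟩ := ih2
      refine ⟨T1 ∪ T2, ?_, .sup (h1.mono' ?_) (h2.mono' ?_)⟩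
      · intro j hj; rcases Finset.mem_union.mp hj with h | h
        exacts [hT1 j h, hT2 j h]
      · rintro a ⟨j, hj, rfl⟩; exact ⟨j, Finset.mem_union_left _ hj, rfl⟩
      · rintro a ⟨j, hj, rfl⟩; exact ⟨j, Finset.mem_union_right _ hj, rfl⟩
  | compl _ ih =>
      obtain ⟨T, hT, h⟩ := ih
      exact ⟨T, hT, .compl h⟩

lemma decide_pair {W Fr : Type u} [LinearOrder W] [BooleanAlgebra Fr]
    (u : W → Fr) {T : Finset W} {e e' b : Fr}
    (hd : ∀ k ∈ T, (e ≤ u k ∧ e' ≤ u k) ∨ (e ≤ (u k)ᶜ ∧ e' ≤ (u k)ᶜ))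
    (hb : BAGen {a : Fr | ∃ j ∈ T, a = u j} b) :
    (e ≤ b ∧ e' ≤ b) ∨ (e ≤ bᶜ ∧ e' ≤ bᶜ) := by
  induction hb with
  | base ha => obtain ⟨j, hj, rfl⟩ := ha; exact hd j hj
  | bot => exact Or.inr (by simp)
  | sup _ _ ih1 ih2 =>
      rcases ih1 with ⟨h1, h2⟩ | ⟨h1, h2⟩
      · exact Or.inl ⟨h1.trans le_sup_left, h2.trans le_sup_left⟩
      rcases ih2 with ⟨g1, g2⟩ | ⟨g1, g2⟩
      · exact Or.inl ⟨g1.trans le_sup_right, g2.trans le_sup_right⟩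
      · exact Or.inr (by rw [compl_sup]; exact ⟨le_inf h1 g1, le_inf h2 g2⟩)
  | compl _ ih =>
      rcases ih with h | h
      · exact Or.inr (by rwa [compl_compl])
      · exact Or.inl h

/-- Remark 3.3 for `A(p) = Fr(w)/N(p)`: each canonical generator `x i = c (u i)` is not
in the subalgebra of `A(p)` generated by `{x j : j < i}`. -/
theorem generator_not_in_lower_subalgebra {W Fr Q : Type u} [LinearOrder W]
    [BooleanAlgebra Fr] [BooleanAlgebra Q]
    (u : W → Fr)
    (hind : ∀ s t : Finset W, (∀ i ∈ s, i ∉ t) →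
      s.inf u ⊓ t.inf (fun i => (u i)ᶜ) ≠ ⊥)
    (hgen : ∀ a : Fr, BAGen (Set.range u) a)
    (p : W → W → VVal) (hp : IsValuation p)
    (c : BoundedLatticeHom Fr Q) (hsurj : Function.Surjective c)
    (hker : ∀ a : Fr, c a = ⊥ ↔ ∃ F : Finset (W × W),
      (∀ q ∈ F, q.1 < q.2 ∧ (p q.1 q.2 = VVal.perp ∨ p q.1 q.2 = VVal.ge)) ∧
      a ≤ F.sup (fun q => if p q.1 q.2 = VVal.perp then u q.2 ⊓ u q.1
        else u q.2 ⊓ (u q.1)ᶜ)) :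
    ∀ i : W, ¬ BAGen {a : Q | ∃ j : W, j < i ∧ a = c (u j)} (c (u i)) := by
  intro i hmem
  obtain ⟨b, hbgen, hcb⟩ := lift_gen c u i hmem
  obtain ⟨T, hTlt, hbT⟩ := finsupp_gen u i hbgen
  have h1 : c (u i ⊓ bᶜ) = ⊥ := by
    rw [map_inf, blh_compl, hcb, inf_compl_eq_bot]
  have h2 : c (b ⊓ (u i)ᶜ) = ⊥ := by
    rw [map_inf, blh_compl, hcb, inf_compl_eq_bot]
  obtain ⟨F₁, hF₁p, hF₁le⟩ := (hker _).mp h1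
  obtain ⟨F₂, hF₂p, hF₂le⟩ := (hker _).mp h2
  classical
  -- the two assignments (parametrized by the value `v` at `i`)
  set f : Bool → W → Bool := fun v k =>
    if k < i then decide (p k i = VVal.ge) else if k = i then v else false with hf
  -- the relevant finite set of indices
  set E : Finset W := insert i (T ∪ F₁.image Prod.fst ∪ F₁.image Prod.snd ∪
    F₂.image Prod.fst ∪ F₂.image Prod.snd) with hE
  -- the witnessing elements
  set e : Bool → Fr := fun v =>
    (E.filter (fun k => f v k = true)).inf u ⊓
      (E.filter (fun k => f v k = false)).inf (fun k => (u k)ᶜ) with he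
  have hne : ∀ v, e v ≠ ⊥ := by
    intro v
    apply hind
    intro k hk hk'
    simp only [Finset.mem_filter] at hk hk'
    rw [hk.2] at hk'
    exact absurd hk'.2 (by simp)
  have hdT : ∀ v k, k ∈ E → f v k = true → e v ≤ u k := by
    intro v k hk hfk
    exact le_trans inf_le_left (Finset.inf_le (Finset.mem_filter.mpr ⟨hk, hfk⟩))
  have hdF : ∀ v k, k ∈ E → f v k = false → e v ≤ (u k)ᶜ := by
    intro v k hk hfk
    exact le_trans inf_le_right (Finset.inf_le (Finset.mem_filter.mpr ⟨hk, hfk⟩))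
  have hiE : i ∈ E := Finset.mem_insert_self _ _
  -- combinatorial core: the assignments respect the relations
  have hcomb_perp : ∀ (v : Bool) (a b' : W), a < b' → p a b' = VVal.perp →
      f v a = false ∨ f v b' = false := by
    intro v a b' hab hperp
    rcases lt_trichotomy b' i with hbi | rfl | hib
    · by_contra hcon
      push_neg at hcon
      obtain ⟨ha, hb⟩ := hcon
      have hai : a < i := hab.trans hbi
      have ha' : p a i = VVal.ge := by
        have := ha; simp only [hf, if_pos hai] at this; simpa using this
      have hb' : p b' i = VVal.ge := by
        have := hb; simp only [hf, if_pos hbi] at this; simpa using this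
      have := hp.mix3 a b' i hab hbi hperp hb'
      rw [this] at ha'; exact absurd ha' (by simp)
    · left
      simp only [hf, if_pos hab]
      simp [hperp]
    · right
      simp only [hf, if_neg (not_lt.mpr hib.le), if_neg (ne_of_gt hib)]
  have hcomb_ge : ∀ (v : Bool) (a b' : W), a < b' → p a b' = VVal.ge →
      f v b' = true → f v a = true := by
    intro v a b' hab hge hb
    rcases lt_trichotomy b' i with hbi | rfl | hib
    · have hai : a < i := hab.trans hbi
      have hb' : p b' i = VVal.ge := by
        have := hb; simp only [hf, if_pos hbi] at this; simpa using this
      have := hp.trans_ge a b' i hab hbi hge hb'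
      simp only [hf, if_pos hai]; simp [this]
    · simp only [hf, if_pos hab]; simp [hge]
    · exfalso
      have := hb
      simp only [hf, if_neg (not_lt.mpr hib.le), if_neg (ne_of_gt hib)] at this
      exact absurd this (by simp)
  -- falsification of the kernel witnesses
  have hfals : ∀ (v : Bool) (F : Finset (W × W)),
      (∀ q ∈ F, q.1 < q.2 ∧ (p q.1 q.2 = VVal.perp ∨ p q.1 q.2 = VVal.ge)) →
      (∀ q ∈ F, q.1 ∈ E ∧ q.2 ∈ E) →
      Disjoint (e v) (F.sup (fun q => if p q.1 q.2 = VVal.perp then u q.2 ⊓ u q.1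
        else u q.2 ⊓ (u q.1)ᶜ)) := by
    intro v F hFp hFE
    rw [Finset.disjoint_sup_right]
    intro q hq
    obtain ⟨hlt, hval⟩ := hFp q hq
    obtain ⟨h1E, h2E⟩ := hFE q hq
    rcases hval with hperp | hge
    · rw [if_pos hperp]
      rcases hcomb_perp v q.1 q.2 hlt hperp with hfa | hfb
      · have : Disjoint (e v) (u q.1) :=
          le_compl_iff_disjoint_right.mp (hdF v q.1 h1E hfa)
        exact this.mono_right inf_le_right
      · have : Disjoint (e v) (u q.2) :=
          le_compl_iff_disjoint_right.mp (hdF v q.2 h2E hfb)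
        exact this.mono_right inf_le_left
    · rw [if_neg (by simp [hge])]
      cases hfb : f v q.2 with
      | false =>
          have : Disjoint (e v) (u q.2) :=
            le_compl_iff_disjoint_right.mp (hdF v q.2 h2E hfb)
          exact this.mono_right inf_le_left
      | true =>
          have hfa := hcomb_ge v q.1 q.2 hlt hge hfb
          have : Disjoint (e v) (u q.1)ᶜ := by
            rw [← le_compl_iff_disjoint_right, compl_compl]
            exact hdT v q.1 h1E hfa
          exact this.mono_right inf_le_right
  have hF₁E : ∀ q ∈ F₁, q.1 ∈ E ∧ q.2 ∈ E := by
    intro q hq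
    constructor <;> rw [hE] <;> apply Finset.mem_insert_of_mem
    · exact Finset.mem_union_left _ (Finset.mem_union_left _ (Finset.mem_union_left _
        (Finset.mem_union_right _ (Finset.mem_image_of_mem _ hq))))
    · exact Finset.mem_union_left _ (Finset.mem_union_left _
        (Finset.mem_union_right _ (Finset.mem_image_of_mem _ hq)))
  have hF₂E : ∀ q ∈ F₂, q.1 ∈ E ∧ q.2 ∈ E := by
    intro q hq
    constructor <;> rw [hE] <;> apply Finset.mem_insert_of_mem
    · exact Finset.mem_union_left _
        (Finset.mem_union_right _ (Finset.mem_image_of_mem _ hq))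
    · exact Finset.mem_union_right _ (Finset.mem_image_of_mem _ hq)
  -- b takes the same value under both assignments
  have hsame : (e false ≤ b ∧ e true ≤ b) ∨ (e false ≤ bᶜ ∧ e true ≤ bᶜ) := by
    apply decide_pair u _ hbT
    intro k hk
    have hki : k < i := hTlt k hk
    have hkE : k ∈ E := by
      rw [hE]
      exact Finset.mem_insert_of_mem (Finset.mem_union_left _ (Finset.mem_union_left _
        (Finset.mem_union_left _ (Finset.mem_union_left _ hk))))
    cases hv : decide (p k i = VVal.ge) with
    | true =>
        left
        constructor <;> apply hdT _ _ hkE <;> simp [hf, if_pos hki, hv]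
    | false =>
        right
        constructor <;> apply hdF _ _ hkE <;> simp [hf, if_pos hki, hv]
  have hfi_false : f false i = false := by
    simp [hf]
  have hfi_true : f true i = true := by
    simp [hf]
  rcases hsame with ⟨hb0, _⟩ | ⟨_, hb1⟩
  · -- b "true": use e false ≤ b ⊓ (u i)ᶜ ≤ sup F₂, contradiction
    have hle : e false ≤ b ⊓ (u i)ᶜ := le_inf hb0 (hdF false i hiE hfi_false)
    have hdisj := hfals false F₂ hF₂p hF₂E
    have : e false = ⊥ := le_bot_iff.mp (hdisj le_rfl (hle.trans hF₂le))
    exact hne false this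
  · -- b "false": use e true ≤ u i ⊓ bᶜ ≤ sup F₁, contradiction
    have hle : e true ≤ u i ⊓ bᶜ := le_inf (hdT true i hiE hfi_true) hb1
    have hdisj := hfals true F₁ hF₁p hF₁E
    have : e true = ⊥ := le_bot_iff.mp (hdisj le_rfl (hle.trans hF₁le))
    exact hne true this
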